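/- Let A_s be a weakly irreducible nonnegative tensor of order m and dimension n, with positive eigenvalue λ_s (the spectral radius) and positive eigenvector x_s: A_s x_s^{m−1} = λ_s x_s^{[m−1]}. Then the matrix M = (m−1) λ_s diag(x_s)^{m−2} − Σ_{k=2}^m A^{(k)} is an irreducible singular M-matrix with Ker(M) = { c x_s : c ∈ ℝ } and rank(M) = n − 1. -/

import Mathlib

open Matrix

/-- For an order (q+2), dimension n tensor `T` over a commutative (semi)ring and a
vector `x`, `tapply T x i = (T x^{m-1})_i = ∑ a_{i i₂ … i_m} x_{i₂} ⋯ x_{i_m}`. -/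
def tapply {R : Type*} [CommSemiring R] {n q : ℕ}
    (T : (Fin (q + 2) → Fin n) → R) (x : Fin n → R) (i : Fin n) : R :=
  ∑ g : Fin (q + 1) → Fin n, T (Fin.cons i g) * ∏ l, x (g l)

/-- The matrix A^{(k)} of Theorem 3.1 (k indexed by the m−1 tail positions):
(A^{(k)})_{ij} = ∑_{i₂,…,i_m, i_k = j} a_{i i₂ … i_m} ∏_{l ∉ {1,k}} x_{i_l}. -/
def Ak {n q : ℕ} (T : (Fin (q + 2) → Fin n) → ℝ) (x : Fin n → ℝ)
    (k : Fin (q + 1)) : Matrix (Fin n) (Fin n) ℝ :=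
  Matrix.of fun i j =>
    ∑ g ∈ Finset.univ.filter (fun g : Fin (q + 1) → Fin n => g k = j),
      T (Fin.cons i g) * ∏ l ∈ Finset.univ.erase k, x (g l)

/-- The matrix M = (m−1) λ_s diag(x_s)^{m−2} − ∑_{k=2}^m A^{(k)} of Theorem 3.1
(order m = q+2). -/
noncomputable def Mmat {n q : ℕ} (T : (Fin (q + 2) → Fin n) → ℝ) (x : Fin n → ℝ)
    (ls : ℝ) : Matrix (Fin n) (Fin n) ℝ :=
  ((q : ℝ) + 1) • ls • (Matrix.diagonal x) ^ q - ∑ k : Fin (q + 1), Ak T x k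

/-- A tensor is weakly irreducible if its associated digraph, with an arc (i,j)
whenever some entry a_{i i₂ … i_m} ≠ 0 with j among i₂,…,i_m, is strongly
connected. -/
def WeaklyIrreducible {n q : ℕ} (T : (Fin (q + 2) → Fin n) → ℝ) : Prop :=
  ∀ i j : Fin n, Relation.ReflTransGen
    (fun a b => ∃ g : Fin (q + 1) → Fin n, T (Fin.cons a g) ≠ 0 ∧ ∃ l, g l = b) i j

section aux

variable {n q : ℕ}

lemma Ak_entry_nonneg (T : (Fin (q + 2) → Fin n) → ℝ) (hnn : ∀ f, 0 ≤ T f)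
    (x : Fin n → ℝ) (hx : ∀ i, 0 ≤ x i) (k : Fin (q + 1)) (i j : Fin n) :
    0 ≤ Ak T x k i j :=
  Finset.sum_nonneg fun _ _ =>
    mul_nonneg (hnn _) (Finset.prod_nonneg fun _ _ => hx _)

lemma sumA_nonneg (T : (Fin (q + 2) → Fin n) → ℝ) (hnn : ∀ f, 0 ≤ T f)
    (x : Fin n → ℝ) (hx : ∀ i, 0 ≤ x i) (i j : Fin n) :
    0 ≤ (∑ k : Fin (q + 1), Ak T x k) i j := by
  rw [Matrix.sum_apply]
  exact Finset.sum_nonneg fun k _ => Ak_entry_nonneg T hnn x hx k i j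

lemma sumA_pos (T : (Fin (q + 2) → Fin n) → ℝ) (hnn : ∀ f, 0 ≤ T f)
    (x : Fin n → ℝ) (hx : ∀ i, 0 < x i) {i j : Fin n}
    (h : ∃ g : Fin (q + 1) → Fin n, T (Fin.cons i g) ≠ 0 ∧ ∃ l, g l = j) :
    0 < (∑ k : Fin (q + 1), Ak T x k) i j := by
  obtain ⟨g, hT, l, hl⟩ := h
  have h1 : 0 < Ak T x l i j := by
    unfold Ak
    simp only [Matrix.of_apply]
    refine Finset.sum_pos'
      (fun g' _ => mul_nonneg (hnn _) (Finset.prod_nonneg fun _ _ => (hx _).le))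
      ⟨g, ?_, ?_⟩
    · simp [hl]
    · exact mul_pos ((hnn _).lt_of_ne (Ne.symm hT))
        (Finset.prod_pos fun _ _ => hx _)
  rw [Matrix.sum_apply]
  exact lt_of_lt_of_le h1
    (Finset.single_le_sum (fun k _ => Ak_entry_nonneg T hnn x (fun i => (hx i).le) k i j)
      (Finset.mem_univ l))

lemma Ak_mulVec (T : (Fin (q + 2) → Fin n) → ℝ) (x : Fin n → ℝ) (k : Fin (q + 1))
    (i : Fin n) : (Ak T x k *ᵥ x) i = tapply T x i := by
  unfold Matrix.mulVec dotProduct Ak tapply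
  simp only [Matrix.of_apply]
  rw [← Finset.sum_fiberwise Finset.univ (fun g : Fin (q + 1) → Fin n => g k)
    (fun g => T (Fin.cons i g) * ∏ l, x (g l))]
  refine Finset.sum_congr rfl fun j _ => ?_
  rw [Finset.sum_mul]
  refine Finset.sum_congr rfl fun g hg => ?_
  simp only [Finset.mem_filter] at hg
  rw [mul_assoc]
  congr 1
  rw [← hg.2, Finset.prod_erase_mul _ _ (Finset.mem_univ k)]

lemma sumA_mulVec (T : (Fin (q + 2) → Fin n) → ℝ) (x : Fin n → ℝ) (i : Fin n) :
    ((∑ k : Fin (q + 1), Ak T x k) *ᵥ x) i = ((q : ℝ) + 1) * tapply T x i := by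
  have : ((∑ k : Fin (q + 1), Ak T x k) *ᵥ x) i
      = ∑ k : Fin (q + 1), (Ak T x k *ᵥ x) i := by
    unfold Matrix.mulVec dotProduct
    simp only [Matrix.sum_apply, Finset.sum_mul]
    rw [Finset.sum_comm]
  rw [this]
  simp only [Ak_mulVec]
  rw [Finset.sum_const, Finset.card_univ, Fintype.card_fin, nsmul_eq_mul]
  push_cast
  ring

lemma Mmat_mulVec_apply (T : (Fin (q + 2) → Fin n) → ℝ) (x : Fin n → ℝ) (ls : ℝ)
    (v : Fin n → ℝ) (i : Fin n) :
    (Mmat T x ls *ᵥ v) i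
      = ((q : ℝ) + 1) * ls * x i ^ q * v i
        - ((∑ k : Fin (q + 1), Ak T x k) *ᵥ v) i := by
  unfold Mmat
  rw [Matrix.sub_mulVec, Matrix.diagonal_pow]
  simp only [Matrix.smul_mulVec, Pi.sub_apply, Pi.smul_apply, smul_eq_mul,
    Matrix.mulVec_diagonal, Pi.pow_apply]
  ring

lemma Mmat_apply (T : (Fin (q + 2) → Fin n) → ℝ) (x : Fin n → ℝ) (ls : ℝ)
    (i j : Fin n) :
    Mmat T x ls i j
      = (if i = j then ((q : ℝ) + 1) * ls * x i ^ q else 0)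
        - (∑ k : Fin (q + 1), Ak T x k) i j := by
  unfold Mmat
  rw [Matrix.sub_apply, Matrix.diagonal_pow]
  simp only [Matrix.smul_apply, Matrix.diagonal_apply, Pi.pow_apply, smul_eq_mul]
  split <;> ring_nf

lemma Mmat_mulVec_eigen (T : (Fin (q + 2) → Fin n) → ℝ) (x : Fin n → ℝ) (ls : ℝ)
    (heig : tapply T x = fun i => ls * x i ^ (q + 1)) :
    Mmat T x ls *ᵥ x = 0 := by
  funext i
  rw [Pi.zero_apply, Mmat_mulVec_apply, sumA_mulVec, congrFun heig i, pow_succ]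
  ring

/-- Perron bound: eigenvalues of a nonnegative matrix with a positive eigenvector are
dominated by the corresponding eigenvalue. -/
lemma spec_bound (B : Matrix (Fin n) (Fin n) ℝ) (hB : ∀ i j, 0 ≤ B i j)
    (x : Fin n → ℝ) (hx : ∀ i, 0 < x i) (s : ℝ)
    (hBx : ∀ i, (B *ᵥ x) i = s * x i)
    (μ : ℂ) (hμ : μ ∈ spectrum ℂ (B.map (Complex.ofReal : ℝ → ℂ))) :
    ‖μ‖ ≤ s := by
  rw [spectrum.mem_iff, Matrix.isUnit_iff_isUnit_det, isUnit_iff_ne_zero, not_not,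
    ← Matrix.exists_mulVec_eq_zero_iff] at hμ
  obtain ⟨z, hz0, hz⟩ := hμ
  have hBz : ∀ i, (B.map (Complex.ofReal : ℝ → ℂ) *ᵥ z) i = μ * z i := by
    intro i
    have h1 := congrFun hz i
    rw [Matrix.sub_mulVec, Pi.zero_apply, Pi.sub_apply, sub_eq_zero] at h1
    rw [← h1]
    have : (algebraMap ℂ (Matrix (Fin n) (Fin n) ℂ)) μ = μ • 1 := by
      rw [Algebra.algebraMap_eq_smul_one]
    rw [this, Matrix.smul_mulVec, Matrix.one_mulVec, Pi.smul_apply, smul_eq_mul]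
  obtain ⟨i1, hi1⟩ : ∃ i, z i ≠ 0 := by
    by_contra h
    push_neg at h
    exact hz0 (funext h)
  obtain ⟨i0, -, hi0⟩ := Finset.exists_max_image Finset.univ
    (fun i => ‖z i‖ / x i) ⟨i1, Finset.mem_univ i1⟩
  set t := ‖z i0‖ / x i0 with ht_def
  have ht : 0 < t :=
    lt_of_lt_of_le (div_pos (norm_pos_iff.mpr hi1) (hx i1)) (hi0 i1 (Finset.mem_univ i1))
  have hyle : ∀ j, ‖z j‖ ≤ t * x j := fun j =>
    (div_le_iff₀ (hx j)).1 (hi0 j (Finset.mem_univ j))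
  have htx : t * x i0 = ‖z i0‖ := div_mul_cancel₀ _ (hx i0).ne'
  have hz0pos : 0 < ‖z i0‖ := htx ▸ mul_pos ht (hx i0)
  have key : ‖μ‖ * ‖z i0‖ ≤ s * ‖z i0‖ := by
    calc ‖μ‖ * ‖z i0‖
        = ‖(B.map (Complex.ofReal : ℝ → ℂ) *ᵥ z) i0‖ := by
          rw [hBz, norm_mul]
      _ ≤ ∑ j, B i0 j * ‖z j‖ := by
          rw [Matrix.mulVec, dotProduct]
          refine le_trans (norm_sum_le _ _) (le_of_eq ?_)
          refine Finset.sum_congr rfl fun j _ => ?_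
          rw [norm_mul, Matrix.map_apply, Complex.norm_real, Real.norm_eq_abs,
            abs_of_nonneg (hB i0 j)]
      _ ≤ ∑ j, B i0 j * (t * x j) :=
          Finset.sum_le_sum fun j _ => mul_le_mul_of_nonneg_left (hyle j) (hB i0 j)
      _ = t * (B *ᵥ x) i0 := by
          rw [Matrix.mulVec, dotProduct, Finset.mul_sum]
          exact Finset.sum_congr rfl fun j _ => by ring
      _ = s * (t * x i0) := by rw [hBx]; ring
      _ = s * ‖z i0‖ := by rw [htx]
  exact le_of_mul_le_mul_right key hz0pos

lemma s_mem_spec (hn : 0 < n) (B : Matrix (Fin n) (Fin n) ℝ)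
    (x : Fin n → ℝ) (hx : ∀ i, 0 < x i) (s : ℝ) (hBx : B *ᵥ x = s • x) :
    (s : ℂ) ∈ spectrum ℂ (B.map (Complex.ofReal : ℝ → ℂ)) := by
  rw [spectrum.mem_iff, Matrix.isUnit_iff_isUnit_det, isUnit_iff_ne_zero, not_not,
    ← Matrix.exists_mulVec_eq_zero_iff]
  refine ⟨fun i => (x i : ℂ), ?_, ?_⟩
  · intro h
    have := congrFun h ⟨0, hn⟩
    rw [Pi.zero_apply, Complex.ofReal_eq_zero] at this
    exact (hx _).ne' this
  · funext i
    rw [Matrix.sub_mulVec, Pi.zero_apply, Pi.sub_apply, sub_eq_zero]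
    have h1 : (B.map (Complex.ofReal : ℝ → ℂ) *ᵥ fun i => (x i : ℂ)) i
        = ((B *ᵥ x) i : ℂ) := (RingHom.map_mulVec Complex.ofRealHom B x i).symm
    rw [h1, hBx]
    have : (algebraMap ℂ (Matrix (Fin n) (Fin n) ℂ)) (s : ℂ) = (s : ℂ) • 1 := by
      rw [Algebra.algebraMap_eq_smul_one]
    rw [this, Matrix.smul_mulVec, Matrix.one_mulVec]
    simp [Pi.smul_apply, smul_eq_mul]

end aux

/-- If A_s is a weakly irreducible nonnegative tensor with
positive eigenvalue λ_s (the spectral radius) and positive eigenvector x_s, then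
M = (m−1) λ_s diag(x_s)^{m−2} − ∑ A^{(k)} is an irreducible singular M-matrix with
Ker(M) = {c x_s : c ∈ ℝ} and rank(M) = n − 1. -/
theorem stmt10 {n q : ℕ} (Ts : (Fin (q + 2) → Fin n) → ℝ)
    (hnn : ∀ f, 0 ≤ Ts f) (hwi : WeaklyIrreducible Ts)
    (ls : ℝ) (xs : Fin n → ℝ) (hls : 0 < ls) (hxs : ∀ i, 0 < xs i)
    (heig : tapply Ts xs = fun i => ls * xs i ^ (q + 1))
    (hmax : ∀ μ : ℂ, (∃ z : Fin n → ℂ, z ≠ 0 ∧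
        tapply (fun f => (Ts f : ℂ)) z = fun i => μ * z i ^ (q + 1)) →
      ‖μ‖ ≤ ls) :
    (∀ i j : Fin n, Relation.ReflTransGen
        (fun a b => a ≠ b ∧ Mmat Ts xs ls a b ≠ 0) i j) ∧
    (∃ (s : ℝ) (B : Matrix (Fin n) (Fin n) ℝ), (∀ i j, 0 ≤ B i j) ∧
        s = sSup {r : ℝ | ∃ μ ∈ spectrum ℂ (B.map Complex.ofReal), ‖μ‖ = r} ∧
        Mmat Ts xs ls = s • (1 : Matrix (Fin n) (Fin n) ℝ) - B) ∧
    (∀ v : Fin n → ℝ, (Mmat Ts xs ls).mulVec v = 0 ↔ ∃ c : ℝ, v = c • xs) ∧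
    (Mmat Ts xs ls).rank = n - 1 := by
  have hMxs : Mmat Ts xs ls *ᵥ xs = 0 := Mmat_mulVec_eigen Ts xs ls heig
  -- Part 1: irreducibility
  have part1 : ∀ i j : Fin n, Relation.ReflTransGen
      (fun a b => a ≠ b ∧ Mmat Ts xs ls a b ≠ 0) i j := by
    intro i j
    induction hwi i j with
    | refl => exact Relation.ReflTransGen.refl
    | @tail b c _ h ih =>
      by_cases hbc : b = c
      · exact hbc ▸ ih
      · refine ih.tail ⟨hbc, ?_⟩
        rw [Mmat_apply, if_neg hbc, zero_sub, neg_ne_zero]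
        exact (sumA_pos Ts hnn xs hxs h).ne'
  -- Part 3: kernel
  have part3 : ∀ v : Fin n → ℝ, Mmat Ts xs ls *ᵥ v = 0 ↔ ∃ c : ℝ, v = c • xs := by
    intro v
    constructor
    · intro hv
      rcases Nat.eq_zero_or_pos n with h0 | hpos
      · exact ⟨0, funext fun i => absurd i.2 (by omega)⟩
      · obtain ⟨i0, -, hi0⟩ := Finset.exists_min_image Finset.univ
          (fun i => v i / xs i) ⟨⟨0, hpos⟩, Finset.mem_univ _⟩
        set c := v i0 / xs i0 with hc_def
        set w := fun i => v i - c * xs i with hw_def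
        have hw0 : ∀ i, 0 ≤ w i := by
          intro i
          have : c ≤ v i / xs i := hi0 i (Finset.mem_univ i)
          have := (le_div_iff₀ (hxs i)).1 this
          simpa [hw_def] using this
        have hwi0 : w i0 = 0 := by
          simp only [hw_def, hc_def]
          rw [div_mul_cancel₀ _ (hxs i0).ne', sub_self]
        have hMw : Mmat Ts xs ls *ᵥ w = 0 := by
          have : w = v - c • xs := by funext i; simp [hw_def]
          rw [this, Matrix.mulVec_sub, hv, Matrix.mulVec_smul, hMxs]
          simp
        have closure : ∀ a, w a = 0 → ∀ b,
            (∃ g : Fin (q + 1) → Fin n, Ts (Fin.cons a g) ≠ 0 ∧ ∃ l, g l = b) →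
            w b = 0 := by
          intro a ha b harc
          have h1 := congrFun hMw a
          rw [Pi.zero_apply, Mmat_mulVec_apply, ha, mul_zero, zero_sub, neg_eq_zero] at h1
          have h2 : ∀ j, ((∑ k : Fin (q + 1), Ak Ts xs k) a j) * w j = 0 := by
            rw [Matrix.mulVec, dotProduct] at h1
            have := (Finset.sum_eq_zero_iff_of_nonneg fun j _ =>
              mul_nonneg (sumA_nonneg Ts hnn xs (fun i => (hxs i).le) a j) (hw0 j)).1 h1
            exact fun j => this j (Finset.mem_univ j)
          have hApos := sumA_pos Ts hnn xs hxs harc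
          have := h2 b
          rcases mul_eq_zero.1 this with h | h
          · exact absurd h hApos.ne'
          · exact h
        have hall : ∀ j, w j = 0 := by
          intro j
          induction hwi i0 j with
          | refl => exact hwi0
          | @tail b c' _ h ih => exact closure b ih c' h
        refine ⟨c, funext fun i => ?_⟩
        have hwz := hall i
        rw [hw_def] at hwz
        rw [sub_eq_zero] at hwz
        simpa using hwz
    · rintro ⟨c, rfl⟩
      rw [Matrix.mulVec_smul, hMxs, smul_zero]
  -- Part 2: M-matrix
  have part2 : ∃ (s : ℝ) (B : Matrix (Fin n) (Fin n) ℝ), (∀ i j, 0 ≤ B i j) ∧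
      s = sSup {r : ℝ | ∃ μ ∈ spectrum ℂ (B.map Complex.ofReal), ‖μ‖ = r} ∧
      Mmat Ts xs ls = s • (1 : Matrix (Fin n) (Fin n) ℝ) - B := by
    set s : ℝ := ((q : ℝ) + 1) * ls * ∑ j, xs j ^ q with hs_def
    set B : Matrix (Fin n) (Fin n) ℝ := s • (1 : Matrix (Fin n) (Fin n) ℝ) - Mmat Ts xs ls
      with hB_def
    have hBnn : ∀ i j, 0 ≤ B i j := by
      intro i j
      rw [hB_def, Matrix.sub_apply, Matrix.smul_apply, Matrix.one_apply, Mmat_apply,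
        smul_eq_mul]
      by_cases hij : i = j
      · rw [if_pos hij, if_pos hij, mul_one]
        have h1 : ((q : ℝ) + 1) * ls * xs i ^ q ≤ s := by
          rw [hs_def]
          have h0 := Finset.single_le_sum (f := fun j => xs j ^ q)
            (fun j _ => pow_nonneg (hxs j).le q) (Finset.mem_univ i)
          have : (0:ℝ) ≤ ((q : ℝ) + 1) * ls := by positivity
          exact mul_le_mul_of_nonneg_left (by simpa using h0) this
        have h2 := sumA_nonneg Ts hnn xs (fun i => (hxs i).le) i j
        linarith
      · rw [if_neg hij, if_neg hij, mul_zero]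
        have h2 := sumA_nonneg Ts hnn xs (fun i => (hxs i).le) i j
        linarith
    have hMB : Mmat Ts xs ls = s • (1 : Matrix (Fin n) (Fin n) ℝ) - B := by
      rw [hB_def, sub_sub_cancel]
    have hBx : B *ᵥ xs = s • xs := by
      rw [hB_def, Matrix.sub_mulVec, hMxs, Matrix.smul_mulVec, Matrix.one_mulVec,
        sub_zero]
    refine ⟨s, B, hBnn, ?_, hMB⟩
    rcases Nat.eq_zero_or_pos n with h0 | hpos
    · subst h0
      have hempty : {r : ℝ | ∃ μ ∈ spectrum ℂ (B.map Complex.ofReal), ‖μ‖ = r}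
          = ∅ := by
        ext r
        simp only [Set.mem_setOf_eq, Set.mem_empty_iff_false, iff_false, not_exists]
        rintro μ ⟨hμ, -⟩
        rw [spectrum.mem_iff] at hμ
        refine hμ ?_
        rw [Matrix.isUnit_iff_isUnit_det, Matrix.det_isEmpty]
        exact isUnit_one
      rw [hempty, Real.sSup_empty, hs_def]
      simp
    · have hmem : s ∈ {r : ℝ | ∃ μ ∈ spectrum ℂ (B.map Complex.ofReal), ‖μ‖ = r} :=
        ⟨(s : ℂ), s_mem_spec hpos B xs hxs s hBx, by
          rw [Complex.norm_real, Real.norm_eq_abs, abs_of_nonneg]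
          have : 0 ≤ ∑ j, xs j ^ q := Finset.sum_nonneg fun j _ => pow_nonneg (hxs j).le q
          rw [hs_def]; positivity⟩
      have hub : ∀ r ∈ {r : ℝ | ∃ μ ∈ spectrum ℂ (B.map Complex.ofReal), ‖μ‖ = r},
          r ≤ s := by
        rintro r ⟨μ, hμ, rfl⟩
        exact spec_bound B hBnn xs hxs s (fun i => by rw [hBx]; simp [smul_eq_mul]) μ hμ
      exact le_antisymm (le_csSup ⟨s, hub⟩ hmem) (csSup_le ⟨s, hmem⟩ hub)
  -- Part 4: rank
  have part4 : (Mmat Ts xs ls).rank = n - 1 := by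
    have hker : LinearMap.ker (Mmat Ts xs ls).mulVecLin = Submodule.span ℝ {xs} := by
      ext v
      rw [LinearMap.mem_ker, Matrix.mulVecLin_apply, Submodule.mem_span_singleton]
      rw [part3 v]
      constructor
      · rintro ⟨c, rfl⟩; exact ⟨c, rfl⟩
      · rintro ⟨c, rfl⟩; exact ⟨c, rfl⟩
    rcases Nat.eq_zero_or_pos n with h0 | hpos
    · have h1 : (Mmat Ts xs ls).rank ≤ Fintype.card (Fin n) :=
        Matrix.rank_le_card_width _
      rw [Fintype.card_fin] at h1
      omega
    · have hx0 : xs ≠ 0 := fun h => (hxs ⟨0, hpos⟩).ne' (congrFun h _)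
      have h1 : Module.finrank ℝ (LinearMap.ker (Mmat Ts xs ls).mulVecLin) = 1 := by
        rw [hker]
        exact finrank_span_singleton hx0
      have h2 := LinearMap.finrank_range_add_finrank_ker (Mmat Ts xs ls).mulVecLin
      rw [Module.finrank_fintype_fun_eq_card, Fintype.card_fin, h1] at h2
      have h3 : (Mmat Ts xs ls).rank
          = Module.finrank ℝ (LinearMap.range (Mmat Ts xs ls).mulVecLin) := rfl
      omega
  exact ⟨part1, part2, part3, part4⟩
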